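/- Let K be a field of characteristic different from 2 and let a, b be nonzero elements of K. Then either the quaternion algebra ℍ[K,a,b] is a division ring, or it is isomorphic as a K-algebra to the algebra of 2×2 matrices over K. -/

import Mathlib

open Quaternion

/-- Auxiliary quaternionic basis of 2x2 matrices when `b = p^2 - a*q^2`. -/
def quatSplitBasis {K : Type*} [Field K] (a p q : K) :
    QuaternionAlgebra.Basis (Matrix (Fin 2) (Fin 2) K) a 0 (p ^ 2 - a * q ^ 2) where
  i := !![0, a; 1, 0]
  j := !![p, -(a * q); q, -p]
  k := !![a * q, -(a * p); p, -(a * q)]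
  i_mul_i := by
    ext i j
    fin_cases i <;> fin_cases j <;>
      simp [Matrix.mul_apply, Fin.sum_univ_succ, Matrix.one_apply] <;> ring
  j_mul_j := by
    ext i j
    fin_cases i <;> fin_cases j <;>
      simp [Matrix.mul_apply, Fin.sum_univ_succ, Matrix.one_apply] <;> ring
  i_mul_j := by
    ext i j
    fin_cases i <;> fin_cases j <;>
      simp [Matrix.mul_apply, Fin.sum_univ_succ] <;> ring
  j_mul_i := by
    ext i j
    fin_cases i <;> fin_cases j <;>
      simp [Matrix.mul_apply, Fin.sum_univ_succ] <;> ring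

lemma quatSplitBasis_liftHom_apply {K : Type*} [Field K] (a p q : K)
    (x : ℍ[K, a, p ^ 2 - a * q ^ 2]) :
    (quatSplitBasis a p q).liftHom x =
      !![x.re + x.imJ * p + x.imK * (a * q),
          x.imI * a - x.imJ * (a * q) - x.imK * (a * p);
        x.imI + x.imJ * q + x.imK * p,
          x.re - x.imJ * p - x.imK * (a * q)] := by
  show (algebraMap K (Matrix (Fin 2) (Fin 2) K) x.re)
      + x.imI • !![0, a; 1, 0] + x.imJ • !![p, -(a * q); q, -p]
      + x.imK • !![a * q, -(a * p); p, -(a * q)] = _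
  ext i j
  fin_cases i <;> fin_cases j <;>
    simp [Matrix.algebraMap_matrix_apply] <;> ring

/-- Auxiliary inverse map from matrices to the quaternion algebra. -/
def quatSplitInv {K : Type*} [Field K] (a b p q : K)
    (M : Matrix (Fin 2) (Fin 2) K) : ℍ[K, a, b] :=
  ⟨a * b * (M 0 0 + M 1 1) / (2 * a * b),
    b * (a * M 1 0 + M 0 1) / (2 * a * b),
    a * (p * (M 0 0 - M 1 1) - q * (a * M 1 0 - M 0 1)) / (2 * a * b),
    (p * (a * M 1 0 - M 0 1) - a * q * (M 0 0 - M 1 1)) / (2 * a * b)⟩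

theorem quaternionAlgebra_isDivisionRing_or_iso_matrix
    (K : Type*) [Field K] (hchar : ringChar K ≠ 2) (a b : K) (ha : a ≠ 0) (hb : b ≠ 0) :
    (∀ q : ℍ[K, a, b], q ≠ 0 → IsUnit q) ∨
      Nonempty (ℍ[K, a, b] ≃ₐ[K] Matrix (Fin 2) (Fin 2) K) := by
  have h2 : (2 : K) ≠ 0 := Ring.two_ne_zero hchar
  -- if `a` is a square, then `b` is represented by `x² - a y²`
  have hsq : (∃ α : K, α ^ 2 = a) → ∃ p q : K, p ^ 2 - a * q ^ 2 = b := by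
    rintro ⟨α, rfl⟩
    have hα : α ≠ 0 := fun h => ha (by simp [h])
    refine ⟨(b + 1) / 2, (b - 1) / (2 * α), ?_⟩
    field_simp
    ring
  by_cases hsplit : ∃ p q : K, p ^ 2 - a * q ^ 2 = b
  · right
    obtain ⟨p, q, hpq⟩ := hsplit
    subst hpq
    have hbne : p ^ 2 - a * q ^ 2 ≠ 0 := hb
    have hD : (2 * a * (p ^ 2 - a * q ^ 2) : K) ≠ 0 :=
      mul_ne_zero (mul_ne_zero h2 ha) hb
    refine ⟨AlgEquiv.ofBijective (quatSplitBasis a p q).liftHom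
      (Function.bijective_iff_has_inverse.mpr
        ⟨quatSplitInv a (p ^ 2 - a * q ^ 2) p q, fun x => ?_, fun M => ?_⟩)⟩
    · rw [quatSplitBasis_liftHom_apply]
      apply QuaternionAlgebra.ext <;>
        · show _ / (2 * a * (p ^ 2 - a * q ^ 2)) = _
          simp only [Matrix.cons_val', Matrix.cons_val_zero, Matrix.cons_val_one,
            Matrix.head_cons, Matrix.head_fin_const, Matrix.of_apply, Matrix.empty_val',
            Matrix.cons_val_fin_one]
          rw [div_eq_iff hD]
          ring
    · rw [quatSplitBasis_liftHom_apply]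
      ext i j
      fin_cases i <;> fin_cases j <;>
        · simp only [quatSplitInv, Matrix.cons_val', Matrix.cons_val_zero, Matrix.cons_val_one,
            Matrix.head_cons, Matrix.head_fin_const, Matrix.of_apply, Matrix.empty_val',
            Matrix.cons_val_fin_one, Fin.zero_eta, Fin.mk_one, div_mul_eq_mul_div,
            ← add_div, div_sub_div_same]
          rw [div_eq_iff hD]
          ring
  · left
    intro x hx
    set n : K := x.re ^ 2 - a * x.imI ^ 2 - b * x.imJ ^ 2 + a * b * x.imK ^ 2 with hn
    have hn0 : n ≠ 0 := by
      intro h0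
      have hn' : x.re ^ 2 - a * x.imI ^ 2 - b * x.imJ ^ 2 + a * b * x.imK ^ 2 = 0 := by
        rw [← hn]; exact h0
      by_cases hzw : x.imJ ^ 2 - a * x.imK ^ 2 = 0
      · by_cases hw : x.imK = 0
        · have hz : x.imJ = 0 := by
            have h' : x.imJ ^ 2 = 0 := by rw [hw] at hzw; linear_combination hzw
            exact pow_eq_zero_iff (n := 2) (by norm_num) |>.mp h'
          by_cases hy : x.imI = 0
          · have hx0 : x.re = 0 := by
              have h' : x.re ^ 2 = 0 := by
                rw [hw, hz, hy] at hn'; linear_combination hn'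
              exact pow_eq_zero_iff (n := 2) (by norm_num) |>.mp h'
            exact hx (QuaternionAlgebra.ext hx0 hy hz hw)
          · refine hsplit (hsq ⟨x.re / x.imI, ?_⟩)
            rw [hw, hz] at hn'
            field_simp
            linear_combination hn'
        · refine hsplit (hsq ⟨x.imJ / x.imK, ?_⟩)
          field_simp
          linear_combination hzw
      · refine hsplit ⟨(x.re * x.imJ - a * x.imI * x.imK) / (x.imJ ^ 2 - a * x.imK ^ 2),
          (x.imI * x.imJ - x.re * x.imK) / (x.imJ ^ 2 - a * x.imK ^ 2), ?_⟩
        field_simp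
        linear_combination (x.imJ ^ 2 - a * x.imK ^ 2) * hn'
    refine ⟨⟨x, ⟨x.re / n, -x.imI / n, -x.imJ / n, -x.imK / n⟩, ?_, ?_⟩, rfl⟩
    · apply QuaternionAlgebra.ext <;>
        simp only [QuaternionAlgebra.re_mul, QuaternionAlgebra.imI_mul,
          QuaternionAlgebra.imJ_mul, QuaternionAlgebra.imK_mul, QuaternionAlgebra.re_one,
          QuaternionAlgebra.imI_one, QuaternionAlgebra.imJ_one, QuaternionAlgebra.imK_one] <;>
        field_simp <;> ring
    · apply QuaternionAlgebra.ext <;>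
        simp only [QuaternionAlgebra.re_mul, QuaternionAlgebra.imI_mul,
          QuaternionAlgebra.imJ_mul, QuaternionAlgebra.imK_mul, QuaternionAlgebra.re_one,
          QuaternionAlgebra.imI_one, QuaternionAlgebra.imJ_one, QuaternionAlgebra.imK_one] <;>
        field_simp <;> ring
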